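/- Let n ≥ 2 and sample M points i.i.d. uniformly from Fin n. Let Z be the number of uncovered cells and set q = (1 − 1/n)^M. If n·q < 1, then the probability that at least one cell is uncovered satisfies P(Z ≥ 1) ≤ n·q·(1 − q) / (1 − n·q)². -/

import Mathlib

open MeasureTheory Finset

lemma count_pi (n M : ℕ) (S : Finset (Fin n)) :
    (Finset.univ.filter (fun ω : Fin M → Fin n => ∀ j, ω j ∈ S)).card = S.card ^ M := by
  have h : Finset.univ.filter (fun ω : Fin M → Fin n => ∀ j, ω j ∈ S)
      = Fintype.piFinset (fun _ : Fin M => S) := by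
    ext ω; simp [Fintype.mem_piFinset]
  rw [h, Fintype.card_piFinset]
  simp

lemma count_single (n M : ℕ) (i : Fin n) :
    (Finset.univ.filter (fun ω : Fin M → Fin n => ∀ j, ω j ≠ i)).card = (n-1) ^ M := by
  have h := count_pi n M ({i}ᶜ)
  have h2 : Finset.univ.filter (fun ω : Fin M → Fin n => ∀ j, ω j ∈ ({i}ᶜ : Finset (Fin n)))
      = Finset.univ.filter (fun ω : Fin M → Fin n => ∀ j, ω j ≠ i) := by
    ext ω; simp
  rw [h2] at h
  rw [h, card_compl, card_singleton, Fintype.card_fin]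

lemma count_pair (n M : ℕ) (i i' : Fin n) (hne : i ≠ i') :
    (Finset.univ.filter (fun ω : Fin M → Fin n =>
      (∀ j, ω j ≠ i) ∧ (∀ j, ω j ≠ i'))).card = (n-2) ^ M := by
  have h := count_pi n M ({i, i'}ᶜ)
  have h2 : Finset.univ.filter (fun ω : Fin M → Fin n => ∀ j, ω j ∈ ({i, i'}ᶜ : Finset (Fin n)))
      = Finset.univ.filter (fun ω : Fin M → Fin n => (∀ j, ω j ≠ i) ∧ (∀ j, ω j ≠ i')) := by
    ext ω
    simp only [mem_filter, mem_compl, mem_insert, mem_singleton, mem_univ, true_and]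
    constructor
    · intro h; exact ⟨fun j he => h j (Or.inl he), fun j he => h j (Or.inr he)⟩
    · rintro ⟨h1, h2⟩ j hj
      cases hj with
      | inl he => exact h1 j he
      | inr he => exact h2 j he
  rw [h2] at h
  rw [h, card_compl, Fintype.card_fin, card_insert_of_notMem (by simpa using hne),
    card_singleton]

lemma meas_eq (n M : ℕ) [ne : Nonempty (Fin M → Fin n)]
    (A : Finset (Fin M → Fin n)) :
    ((PMF.uniformOfFintype (Fin M → Fin n)).toMeasure (A : Set (Fin M → Fin n))).toReal
      = (A.card : ℝ) / (n : ℝ) ^ M := by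
  rw [PMF.toMeasure_apply _ ((A : Set (Fin M → Fin n)).toFinite.measurableSet), tsum_fintype]
  have h1 : ∀ x, (A : Set (Fin M → Fin n)).indicator
      (⇑(PMF.uniformOfFintype (Fin M → Fin n))) x
      = if x ∈ A then ((Fintype.card (Fin M → Fin n) : ENNReal))⁻¹ else 0 := by
    intro x
    by_cases hx : x ∈ A <;> simp [hx, Set.indicator, PMF.uniformOfFintype_apply]
  simp_rw [h1, Finset.sum_ite_mem, Finset.univ_inter, Finset.sum_const, nsmul_eq_mul]
  rw [ENNReal.toReal_mul, ENNReal.toReal_inv]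
  have hcard : Fintype.card (Fin M → Fin n) = n ^ M := by simp
  rw [hcard]
  simp [ENNReal.toReal_pow, div_eq_mul_inv]

lemma alg_ineq (x q N b : ℝ) (hb : b ≤ q^2*N) (hx : 0 ≤ x*x - x) :
    x*(q*N) + x*(x-1)*b - 2*(x*q)*(x*(q*N)) + N*(x*q)^2 ≤ N*(x*q*(1-q)) := by
  nlinarith [mul_nonneg hx (sub_nonneg.2 hb)]

lemma ind_mul (p q : Prop) [Decidable p] [Decidable q] :
    (if p then (1:ℝ) else 0) * (if q then 1 else 0) = if p ∧ q then 1 else 0 := by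
  split_ifs <;> simp_all

/-- With M i.i.d. uniform samples on `Fin n` (n ≥ 2), setting
`q = (1 - 1/n)^M`, if `n*q < 1` then the probability that at least one cell is
uncovered satisfies `P(Z ≥ 1) ≤ n*q*(1-q) / (1 - n*q)²`. -/
theorem prob_uncovered_chebyshev_bound (n M : ℕ) (hn : 2 ≤ n)
    (hq : (n : ℝ) * (1 - 1 / (n : ℝ)) ^ M < 1) :
    ((@PMF.uniformOfFintype (Fin M → Fin n) _ ⟨fun _ => ⟨0, by omega⟩⟩).toMeasure
        {ω | ∃ i : Fin n, ∀ j, ω j ≠ i}).toReal ≤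
      (n : ℝ) * (1 - 1 / (n : ℝ)) ^ M * (1 - (1 - 1 / (n : ℝ)) ^ M)
        / (1 - (n : ℝ) * (1 - 1 / (n : ℝ)) ^ M) ^ 2 := by
  classical
  have hn0 : (0:ℝ) < n := by positivity
  have hn2 : (2:ℝ) ≤ n := by exact_mod_cast hn
  set q : ℝ := (1 - 1/(n:ℝ))^M with hqdef
  set N : ℝ := (n:ℝ)^M with hNdef
  set a : ℝ := ((n-1 : ℕ) : ℝ)^M with hadef
  set b : ℝ := ((n-2 : ℕ) : ℝ)^M with hbdef
  have hNpos : 0 < N := by positivity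
  have hcast1 : ((n-1 : ℕ) : ℝ) = (n:ℝ) - 1 := by
    have : 1 ≤ n := by omega
    push_cast [Nat.cast_sub this]; ring
  have hcast2 : ((n-2 : ℕ) : ℝ) = (n:ℝ) - 2 := by
    push_cast [Nat.cast_sub hn]; ring
  have hqN : q * N = a := by
    rw [hqdef, hNdef, hadef, hcast1, ← mul_pow]
    congr 1
    field_simp
  have hq0 : 0 ≤ q := by
    rw [hqdef]
    apply pow_nonneg
    have : 1/(n:ℝ) ≤ 1 := by
      rw [div_le_one hn0]; linarith
    linarith
  have hbN : b * N ≤ a * a := by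
    rw [hbdef, hNdef, hadef, ← mul_pow, ← mul_pow]
    apply pow_le_pow_left₀ (by positivity)
    rw [hcast1, hcast2]; nlinarith
  -- Z and A
  set Z : (Fin M → Fin n) → ℝ :=
    fun ω => ((Finset.univ.filter (fun i : Fin n => ∀ j, ω j ≠ i)).card : ℝ) with hZdef
  set A : Finset (Fin M → Fin n) :=
    Finset.univ.filter (fun ω => ∃ i : Fin n, ∀ j, ω j ≠ i) with hAdef
  -- rewrite the measure
  have hset : {ω : Fin M → Fin n | ∃ i : Fin n, ∀ j, ω j ≠ i} = (A : Set (Fin M → Fin n)) := by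
    ext ω; simp [hAdef]
  haveI : Nonempty (Fin M → Fin n) := ⟨fun _ => ⟨0, by omega⟩⟩
  rw [hset, meas_eq n M A]
  -- Z as indicator sum
  have hZsum : ∀ ω, Z ω = ∑ i : Fin n, if (∀ j, ω j ≠ i) then (1:ℝ) else 0 := by
    intro ω
    simp only [hZdef]
    rw [Finset.sum_boole]
  -- first moment
  have hS1 : ∑ ω : Fin M → Fin n, Z ω = (n:ℝ) * a := by
    simp_rw [hZsum]
    rw [Finset.sum_comm]
    have : ∀ i : Fin n, (∑ ω : Fin M → Fin n, if (∀ j, ω j ≠ i) then (1:ℝ) else 0) = a := by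
      intro i
      rw [Finset.sum_boole, count_single n M i, hadef]
      push_cast; ring
    simp_rw [this]
    simp [mul_comm]
  -- second moment
  have hS2 : ∑ ω : Fin M → Fin n, (Z ω)^2 = (n:ℝ) * a + (n:ℝ) * ((n:ℝ)-1) * b := by
    have hinner : ∀ (i i' : Fin n),
        (∑ ω : Fin M → Fin n, if ((∀ j, ω j ≠ i) ∧ (∀ j, ω j ≠ i')) then (1:ℝ) else 0)
        = ((Finset.univ.filter (fun ω : Fin M → Fin n =>
            (∀ j, ω j ≠ i) ∧ (∀ j, ω j ≠ i'))).card : ℝ) := by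
      intro i i'
      rw [Finset.sum_boole]
    have h1 : ∀ ω, (Z ω)^2 = ∑ i : Fin n, ∑ i' : Fin n,
        if ((∀ j, ω j ≠ i) ∧ (∀ j, ω j ≠ i')) then (1:ℝ) else 0 := by
      intro ω
      rw [sq, hZsum, Finset.sum_mul_sum]
      congr 1; ext i; congr 1; ext i'
      exact ind_mul _ _
    simp_rw [h1]
    rw [Finset.sum_comm]
    have h2 : ∀ i : Fin n, (∑ ω : Fin M → Fin n, ∑ i' : Fin n,
        if ((∀ j, ω j ≠ i) ∧ (∀ j, ω j ≠ i')) then (1:ℝ) else 0)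
        = a + ((n:ℝ)-1) * b := by
      intro i
      rw [Finset.sum_comm]
      have hdiag : (∑ ω : Fin M → Fin n,
          if ((∀ j, ω j ≠ i) ∧ (∀ j, ω j ≠ i)) then (1:ℝ) else 0) = a := by
        simp_rw [and_self]
        rw [Finset.sum_boole, count_single n M i, hadef]; push_cast; ring
      have hoff : ∀ i' ∈ Finset.univ.erase i,
          (∑ ω : Fin M → Fin n,
            if ((∀ j, ω j ≠ i) ∧ (∀ j, ω j ≠ i')) then (1:ℝ) else 0) = b := by
        intro i' hi'
        rw [hinner i i', count_pair n M i i' (Finset.ne_of_mem_erase hi').symm, hbdef]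
        push_cast; ring
      rw [← Finset.add_sum_erase _ _ (Finset.mem_univ i), hdiag,
        Finset.sum_congr rfl hoff, Finset.sum_const, nsmul_eq_mul,
        Finset.card_erase_of_mem (Finset.mem_univ i)]
      have huniv : (Finset.univ : Finset (Fin n)).card = n := by simp
      rw [huniv, hcast1]
    rw [Finset.sum_congr rfl (fun i _ => h2 i)]
    simp [Finset.sum_const, Fintype.card_fin]
    ring
  -- Chebyshev
  have h1nq : 0 < 1 - (n:ℝ) * q := by rw [hqdef]; linarith
  have hA1 : ∀ ω ∈ A, (1:ℝ) ≤ Z ω := by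
    intro ω hω
    rw [hAdef, Finset.mem_filter] at hω
    obtain ⟨-, i, hi⟩ := hω
    have : i ∈ Finset.univ.filter (fun i : Fin n => ∀ j, ω j ≠ i) := by
      simp [hi]
    have hcard := Finset.card_pos.mpr ⟨i, this⟩
    simp only [hZdef]
    exact_mod_cast hcard
  have step : (A.card : ℝ) * (1 - (n:ℝ)*q)^2 ≤ ∑ ω : Fin M → Fin n, (Z ω - (n:ℝ)*q)^2 := by
    calc (A.card : ℝ) * (1 - (n:ℝ)*q)^2 = ∑ _ω ∈ A, (1 - (n:ℝ)*q)^2 := by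
          rw [Finset.sum_const, nsmul_eq_mul]
      _ ≤ ∑ ω ∈ A, (Z ω - (n:ℝ)*q)^2 := by
          apply Finset.sum_le_sum
          intro ω hω
          apply pow_le_pow_left₀ h1nq.le
          have := hA1 ω hω
          linarith
      _ ≤ ∑ ω : Fin M → Fin n, (Z ω - (n:ℝ)*q)^2 := by
          apply Finset.sum_le_sum_of_subset_of_nonneg (Finset.subset_univ A)
          intro ω _ _
          exact sq_nonneg _
  have hcardU : ((Finset.univ : Finset (Fin M → Fin n)).card : ℝ) = N := by
    rw [hNdef]; simp
  have expand : ∑ ω : Fin M → Fin n, (Z ω - (n:ℝ)*q)^2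
      = (∑ ω : Fin M → Fin n, (Z ω)^2) - 2*((n:ℝ)*q)*(∑ ω : Fin M → Fin n, Z ω)
        + N * ((n:ℝ)*q)^2 := by
    have : ∀ ω : Fin M → Fin n, (Z ω - (n:ℝ)*q)^2
        = (Z ω)^2 - 2*((n:ℝ)*q)*(Z ω) + ((n:ℝ)*q)^2 := fun ω => by ring
    simp_rw [this]
    rw [Finset.sum_add_distrib, Finset.sum_sub_distrib, ← Finset.mul_sum,
      Finset.sum_const, nsmul_eq_mul, hcardU]
  have key : ∑ ω : Fin M → Fin n, (Z ω - (n:ℝ)*q)^2 ≤ N * ((n:ℝ)*q*(1-q)) := by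
    rw [expand, hS1, hS2]
    have hb' : b ≤ q^2 * N := by
      have h2 : (q^2*N)*N = a*a := by rw [← hqN]; ring
      have h1 : b * N ≤ (q^2*N)*N := h2 ▸ hbN
      exact le_of_mul_le_mul_right h1 hNpos
    rw [← hqN]
    exact alg_ineq (n:ℝ) q N b hb' (by nlinarith)
  -- conclude
  rw [div_le_div_iff₀ hNpos (pow_pos h1nq 2)]
  linarith [step, key]
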